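/- For p > q in (0,1), the sum ∑_{k=0}^{s} C(s,k) |p^k(1−p)^{s−k} − q^k(1−q)^{s−k}| equals 2(p−q)·s·C(s−1, k₀)·t^{k₀}(1−t)^{s−1−k₀} for some t ∈ (q,p), where k₀ = ⌊ s·(ln(1−q) − ln(1−p)) / (ln p + ln(1−q) − ln q − ln(1−p)) ⌋; moreover ⌊qs⌋ ≤ k₀ < ps. -/

import Mathlib

open scoped BigOperators

lemma binomial_partial_sum_hasDerivAt (s m : ℕ) (hm : m + 1 ≤ s) (x : ℝ) :
    HasDerivAt (fun y : ℝ => ∑ k ∈ Finset.range (m + 1),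
        (s.choose k : ℝ) * (y ^ k * (1 - y) ^ (s - k)))
      (-((s : ℝ) * ((s - 1).choose m : ℝ) * (x ^ m * (1 - x) ^ (s - 1 - m)))) x := by
  set v : ℕ → ℝ := fun j => if j = 0 then 0 else
    (s : ℝ) * ((s - 1).choose (j - 1) : ℝ) * (x ^ (j - 1) * (1 - x) ^ (s - 1 - (j - 1))) with hv
  have key : ∀ k ∈ Finset.range (m + 1),
      HasDerivAt (fun y : ℝ => (s.choose k : ℝ) * (y ^ k * (1 - y) ^ (s - k)))
        (v k - v (k + 1)) x := by
    intro k hk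
    have hks : k + 1 ≤ s := le_trans (Nat.succ_le_succ (Nat.lt_succ_iff.mp (Finset.mem_range.mp hk))) hm
    have h1 : HasDerivAt (fun y : ℝ => y ^ k) ((k : ℝ) * x ^ (k - 1)) x := hasDerivAt_pow k x
    have h2 : HasDerivAt (fun y : ℝ => (1 - y) ^ (s - k))
        (((s - k : ℕ) : ℝ) * (1 - x) ^ (s - k - 1) * (0 - 1)) x :=
      ((hasDerivAt_const x (1:ℝ)).sub (hasDerivAt_id x)).pow (s - k)
    have h3 : HasDerivAt (fun y : ℝ => (s.choose k : ℝ) * (y ^ k * (1 - y) ^ (s - k))) _ x :=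
      (h1.mul h2).const_mul ((s.choose k : ℝ))
    convert h3 using 1
    rcases k with _ | j
    · norm_num [hv]
    · have hj2 : j + 2 ≤ s := hks
      have idA : ((s.choose (j+1) : ℕ) : ℝ) * (j+1) = (s : ℝ) * ((s-1).choose j : ℕ) := by
        have := Nat.add_one_mul_choose_eq (s-1) j
        rw [Nat.sub_add_cancel (by omega)] at this
        exact_mod_cast congrArg (fun n : ℕ => (n : ℝ)) this.symm
      have idB : ((s.choose (j+1) : ℕ) : ℝ) * ((s - (j+1) : ℕ) : ℝ) = (s : ℝ) * ((s-1).choose (j+1) : ℕ) := by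
        have h4 := Nat.choose_succ_right_eq s (j+1)
        have h5 := Nat.add_one_mul_choose_eq (s-1) (j+1)
        rw [Nat.sub_add_cancel (by omega)] at h5
        have : (s : ℕ) * ((s-1).choose (j+1)) = s.choose (j+1) * (s - (j+1)) := by
          rw [h5, h4]
        exact_mod_cast congrArg (fun n : ℕ => (n : ℝ)) this.symm
      have e1 : s - (j+1) = s - 1 - j := by omega
      have e2 : s - (j+1) - 1 = s - 1 - (j+1) := by omega
      simp only [hv, if_neg (Nat.succ_ne_zero j), if_neg (Nat.succ_ne_zero (j+1)),
        Nat.add_sub_cancel]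
      rw [← e1, ← e2]
      have hle : j + 1 ≤ s := by omega
      push_cast [Nat.cast_sub hle] at idA idB ⊢
      linear_combination (x^(j+1) * (1-x)^(s-(j+1)-1)) * idB - (x ^ j * (1 - x) ^ (s - (j+1))) * idA
  have hsum : HasDerivAt (fun y : ℝ => ∑ k ∈ Finset.range (m + 1),
      (s.choose k : ℝ) * (y ^ k * (1 - y) ^ (s - k))) _ x := HasDerivAt.fun_sum key
  have htel : ∑ k ∈ Finset.range (m + 1), (v k - v (k + 1)) = v 0 - v (m + 1) :=
    Finset.sum_range_sub' v (m + 1)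
  rw [htel] at hsum
  convert hsum using 1
  simp [hv]

set_option maxHeartbeats 1000000 in
/-- For `0 < q < p < 1` and a positive integer `s`, with
`k₀ = ⌊ s·(ln(1-q) - ln(1-p)) / (ln p + ln(1-q) - ln q - ln(1-p)) ⌋`, one has
`⌊qs⌋ ≤ k₀ < ps`, and the sum `∑_k C(s,k)|p^k(1-p)^{s-k} - q^k(1-q)^{s-k}|`
equals `2(p-q)·s·C(s-1,k₀)·t^{k₀}(1-t)^{s-1-k₀}` for some `t ∈ (q, p)`. -/
theorem firstOrderComplexity.binomial_tv_mean_value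
    (s : ℕ) (hs : 0 < s) (p q : ℝ) (hq : 0 < q) (hqp : q < p) (hp : p < 1)
    (k₀ : ℕ)
    (hk₀ : k₀ = ⌊(s : ℝ) * (Real.log (1 - q) - Real.log (1 - p)) /
        (Real.log p + Real.log (1 - q) - Real.log q - Real.log (1 - p))⌋₊) :
    (⌊q * (s : ℝ)⌋₊ ≤ k₀ ∧ (k₀ : ℝ) < p * (s : ℝ)) ∧
    ∃ t ∈ Set.Ioo q p,
      ∑ k ∈ Finset.range (s + 1),
          (s.choose k : ℝ) * |p ^ k * (1 - p) ^ (s - k) - q ^ k * (1 - q) ^ (s - k)|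
        = 2 * (p - q) * (s : ℝ) * ((s - 1).choose k₀ : ℝ) * t ^ k₀ * (1 - t) ^ (s - 1 - k₀) := by
  have hp0 : 0 < p := hq.trans hqp
  have hq1 : q < 1 := hqp.trans hp
  have h1p : 0 < 1 - p := by linarith
  have h1q : 0 < 1 - q := by linarith
  set D : ℝ := Real.log p + Real.log (1 - q) - Real.log q - Real.log (1 - p) with hD
  set A : ℝ := (s : ℝ) * (Real.log (1 - q) - Real.log (1 - p)) with hA
  have hlpq : Real.log q < Real.log p := Real.log_lt_log hq hqp
  have hl1 : Real.log (1 - p) < Real.log (1 - q) := Real.log_lt_log h1p (by linarith)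
  have hDpos : 0 < D := by rw [hD]; linarith
  -- four log inequalities
  have hA1 : q * (Real.log p - Real.log q) ≤ p - q := by
    have h := Real.log_le_sub_one_of_pos (div_pos hp0 hq)
    rw [Real.log_div hp0.ne' hq.ne'] at h
    have h2 : q * (p / q - 1) = p - q := by field_simp
    nlinarith [mul_le_mul_of_nonneg_left h hq.le]
  have hA2 : p - q < p * (Real.log p - Real.log q) := by
    have h := Real.log_lt_sub_one_of_pos (div_pos hq hp0) (by
      intro hcon
      rw [div_eq_one_iff_eq hp0.ne'] at hcon
      exact (ne_of_lt hqp) hcon)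
    rw [Real.log_div hq.ne' hp0.ne'] at h
    have h2 : p * (q / p - 1) = q - p := by field_simp
    nlinarith [mul_lt_mul_of_pos_left h hp0]
  have hB1 : p - q ≤ (1 - q) * (Real.log (1 - q) - Real.log (1 - p)) := by
    have h := Real.log_le_sub_one_of_pos (div_pos h1p h1q)
    rw [Real.log_div h1p.ne' h1q.ne'] at h
    have h2 : (1 - q) * ((1 - p) / (1 - q) - 1) = q - p := by field_simp; ring
    nlinarith [mul_le_mul_of_nonneg_left h h1q.le]
  have hB2 : (1 - p) * (Real.log (1 - q) - Real.log (1 - p)) < p - q := by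
    have h := Real.log_lt_sub_one_of_pos (div_pos h1q h1p) (by
      intro hcon
      rw [div_eq_one_iff_eq h1p.ne'] at hcon
      linarith)
    rw [Real.log_div h1q.ne' h1p.ne'] at h
    have h2 : (1 - p) * ((1 - q) / (1 - p) - 1) = p - q := by field_simp; ring
    nlinarith [mul_lt_mul_of_pos_left h h1p]
  -- bounds on the ratio
  have hqD : q * D ≤ Real.log (1 - q) - Real.log (1 - p) := by
    rw [hD]; nlinarith
  have hpD : Real.log (1 - q) - Real.log (1 - p) < p * D := by
    rw [hD]; nlinarith
  have hscast : (0:ℝ) < (s:ℝ) := by exact_mod_cast hs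
  have hqsR : q * (s:ℝ) ≤ A / D := by
    rw [le_div_iff₀ hDpos, hA]; nlinarith
  have hRps : A / D < p * (s:ℝ) := by
    rw [div_lt_iff₀ hDpos, hA]; nlinarith
  have hR0 : 0 ≤ A / D := le_trans (by positivity) hqsR
  have floor1 : ⌊q * (s:ℝ)⌋₊ ≤ k₀ := by rw [hk₀]; exact Nat.floor_le_floor hqsR
  have hk₀le : (k₀ : ℝ) ≤ A / D := by rw [hk₀]; exact Nat.floor_le hR0
  have hk₀lt : (k₀ : ℝ) < p * (s:ℝ) := lt_of_le_of_lt hk₀le hRps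
  have hk₀s : k₀ + 1 ≤ s := by
    have h1 : (k₀ : ℝ) < (s : ℝ) := by
      calc (k₀ : ℝ) < p * (s:ℝ) := hk₀lt
        _ ≤ 1 * (s:ℝ) := mul_le_mul_of_nonneg_right hp.le hscast.le
        _ = (s:ℝ) := one_mul _
    exact Nat.cast_lt.mp h1
  -- exponential identity
  have expid : ∀ x : ℝ, 0 < x → x < 1 → ∀ k : ℕ, k ≤ s →
      Real.exp ((k:ℝ) * Real.log x + ((s - k : ℕ):ℝ) * Real.log (1 - x))
        = x ^ k * (1 - x) ^ (s - k) := by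
    intro x hx hx1 k hk
    rw [Real.exp_add, Real.exp_nat_mul, Real.exp_nat_mul, Real.exp_log hx,
      Real.exp_log (by linarith : (0:ℝ) < 1 - x)]
  -- sign facts
  have sign_le : ∀ k : ℕ, k ≤ k₀ → p ^ k * (1 - p) ^ (s - k) ≤ q ^ k * (1 - q) ^ (s - k) := by
    intro k hk
    have hks : k ≤ s := by omega
    have hkR : (k : ℝ) ≤ A / D := le_trans (by exact_mod_cast hk) hk₀le
    have hkD : (k : ℝ) * D ≤ A := (le_div_iff₀ hDpos).mp hkR
    rw [← expid p hp0 hp k hks, ← expid q hq hq1 k hks]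
    apply Real.exp_le_exp.mpr
    have hcast : ((s - k : ℕ) : ℝ) = (s : ℝ) - (k : ℝ) := by
      rw [Nat.cast_sub hks]
    rw [hcast]
    rw [hD, hA] at hkD
    ring_nf at hkD ⊢
    linarith
  have sign_ge : ∀ k : ℕ, k₀ < k → k ≤ s → q ^ k * (1 - q) ^ (s - k) ≤ p ^ k * (1 - p) ^ (s - k) := by
    intro k hk hks
    have hfl : A / D < (k₀ : ℝ) + 1 := by rw [hk₀]; exact_mod_cast Nat.lt_floor_add_one (A / D)
    have hkR : A / D ≤ (k : ℝ) := by
      have : (k₀ : ℝ) + 1 ≤ (k : ℝ) := by exact_mod_cast hk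
      linarith
    have hkD : A ≤ (k : ℝ) * D := (div_le_iff₀ hDpos).mp hkR
    rw [← expid p hp0 hp k hks, ← expid q hq hq1 k hks]
    apply Real.exp_le_exp.mpr
    have hcast : ((s - k : ℕ) : ℝ) = (s : ℝ) - (k : ℝ) := by
      rw [Nat.cast_sub hks]
    rw [hcast]
    rw [hD, hA] at hkD
    ring_nf at hkD ⊢
    linarith
  -- binomial sums to one
  have hone : ∀ x : ℝ, ∑ k ∈ Finset.range (s+1), (s.choose k : ℝ) * (x ^ k * (1 - x) ^ (s - k)) = 1 := by
    intro x
    have h := add_pow x (1 - x) s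
    rw [show x + (1 - x) = 1 by ring, one_pow] at h
    trans (∑ k ∈ Finset.range (s+1), x ^ k * (1 - x) ^ (s - k) * (s.choose k : ℝ))
    · exact Finset.sum_congr rfl fun k _ => by ring
    · rw [← h]
  -- the partial sum function and MVT
  set C : ℝ := ((s - 1).choose k₀ : ℝ) with hC
  set g : ℝ → ℝ := fun y => ∑ k ∈ Finset.range (k₀ + 1), (s.choose k : ℝ) * (y ^ k * (1 - y) ^ (s - k)) with hg
  have hderiv : ∀ y : ℝ, HasDerivAt g (-((s:ℝ) * C * (y ^ k₀ * (1 - y) ^ (s - 1 - k₀)))) y :=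
    fun y => binomial_partial_sum_hasDerivAt s k₀ hk₀s y
  obtain ⟨t, htmem, hslope⟩ := exists_hasDerivAt_eq_slope g
    (fun y => -((s:ℝ) * C * (y ^ k₀ * (1 - y) ^ (s - 1 - k₀)))) hqp
    (fun y _ => (hderiv y).continuousAt.continuousWithinAt)
    (fun y _ => hderiv y)
  have hmvt : g q - g p = (p - q) * ((s:ℝ) * C * (t ^ k₀ * (1 - t) ^ (s - 1 - k₀))) := by
    have hne : p - q ≠ 0 := by linarith
    field_simp at hslope
    linarith [hslope]
  refine ⟨⟨floor1, hk₀lt⟩, t, htmem, ?_⟩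
  -- split the sum
  have hsplit : ∑ k ∈ Finset.range (s + 1),
      (s.choose k : ℝ) * |p ^ k * (1 - p) ^ (s - k) - q ^ k * (1 - q) ^ (s - k)|
      = (∑ k ∈ Finset.range (k₀ + 1), (s.choose k : ℝ) * |p ^ k * (1 - p) ^ (s - k) - q ^ k * (1 - q) ^ (s - k)|)
      + ∑ k ∈ Finset.Ico (k₀ + 1) (s + 1), (s.choose k : ℝ) * |p ^ k * (1 - p) ^ (s - k) - q ^ k * (1 - q) ^ (s - k)| :=
    (Finset.sum_range_add_sum_Ico _ (by omega)).symm
  have hlow : ∑ k ∈ Finset.range (k₀ + 1),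
      (s.choose k : ℝ) * |p ^ k * (1 - p) ^ (s - k) - q ^ k * (1 - q) ^ (s - k)|
      = g q - g p := by
    rw [hg]
    rw [← Finset.sum_sub_distrib]
    apply Finset.sum_congr rfl
    intro k hk
    have hk' : k ≤ k₀ := Nat.lt_succ_iff.mp (Finset.mem_range.mp hk)
    rw [abs_of_nonpos (by linarith [sign_le k hk'])]
    ring
  have hhigh : ∑ k ∈ Finset.Ico (k₀ + 1) (s + 1),
      (s.choose k : ℝ) * |p ^ k * (1 - p) ^ (s - k) - q ^ k * (1 - q) ^ (s - k)|
      = g q - g p := by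
    have e1 : ∑ k ∈ Finset.Ico (k₀ + 1) (s + 1),
        (s.choose k : ℝ) * |p ^ k * (1 - p) ^ (s - k) - q ^ k * (1 - q) ^ (s - k)|
        = ∑ k ∈ Finset.Ico (k₀ + 1) (s + 1),
          ((s.choose k : ℝ) * (p ^ k * (1 - p) ^ (s - k)) - (s.choose k : ℝ) * (q ^ k * (1 - q) ^ (s - k))) := by
      apply Finset.sum_congr rfl
      intro k hk
      obtain ⟨hk1, hk2⟩ := Finset.mem_Ico.mp hk
      rw [abs_of_nonneg (by linarith [sign_ge k (by omega) (by omega)])]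
      ring
    rw [e1, Finset.sum_sub_distrib]
    have e2 : ∀ x : ℝ, ∑ k ∈ Finset.Ico (k₀ + 1) (s + 1), (s.choose k : ℝ) * (x ^ k * (1 - x) ^ (s - k))
        = 1 - ∑ k ∈ Finset.range (k₀ + 1), (s.choose k : ℝ) * (x ^ k * (1 - x) ^ (s - k)) := by
      intro x
      have := Finset.sum_range_add_sum_Ico
        (fun k => (s.choose k : ℝ) * (x ^ k * (1 - x) ^ (s - k))) (show k₀ + 1 ≤ s + 1 by omega)
      rw [hone x] at this
      linarith
    rw [e2 p, e2 q, hg]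
    ring
  rw [hsplit, hlow, hhigh, hmvt]
  ring
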